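/- Let γ ≥ 1, p ∈ [0,1], and set r = 1 + γ·(1 − p²); let k ≥ 1 be an integer with k ≤ |V|. Suppose that for every v ∈ V: u(v) > 0, U_min(v) > 0, u(v) ≤ γ · U_min(v), and Ũ_min(v) = u(v) − (β/α) · T_v for some real T_v with p²·S_v ≤ T_v ≤ S_v. If S ⊆ V with |S| = k satisfies f̂(S) ≥ (1/2) · f̂(T) for every T ⊆ V with |T| = k, then f(S) ≥ (1/(2r)) · f(T) for every T ⊆ V with |T| = k; in particular f(S) ≥ (1/(2r)) · f(S*) for any size-k maximizer S* of f. -/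

import Mathlib

open Finset

/-- Deterministic core of the approximate-bounding guarantee: if every sampled neighbor sum
`T_v` satisfies `p²·S_v ≤ T_v ≤ S_v`, the max/min utility ratio is at most `γ`, and a size-`k`
set `S` achieves a `1/2`-approximation for the surrogate objective `f̂`, then `S` achieves a
`1/(2r)`-approximation for `f` with `r = 1 + γ(1 - p²)`; in particular
`f(S) ≥ f(S*)/(2r)` for any size-`k` maximizer `S*` of `f`. -/
theorem approximate_bounding_guarantee {V : Type*} [Fintype V] [DecidableEq V]
    (α β : ℝ) (hα : 0 < α) (hβ : 0 ≤ β)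
    (u : V → ℝ) (s : V → V → ℝ)
    (hsymm : ∀ v w, s v w = s w v) (hnn : ∀ v w, 0 ≤ s v w)
    (hdiag : ∀ v, s v v = 0)
    (f : Finset V → ℝ)
    (hf : ∀ S : Finset V, f S = α * ∑ v ∈ S, u v - (β / 2) * ∑ v ∈ S, ∑ w ∈ S, s v w)
    (Sv : V → ℝ) (hSv : ∀ v, Sv v = ∑ w, s v w)
    (Umin : V → ℝ) (hUmin : ∀ v, Umin v = u v - (β / α) * Sv v)
    (γ p r : ℝ) (hγ : 1 ≤ γ) (hp0 : 0 ≤ p) (hp1 : p ≤ 1)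
    (hr : r = 1 + γ * (1 - p ^ 2))
    (k : ℕ) (hk1 : 1 ≤ k) (hk2 : k ≤ Fintype.card V)
    (hu : ∀ v, 0 < u v) (hUminpos : ∀ v, 0 < Umin v)
    (hratio : ∀ v, u v ≤ γ * Umin v)
    (T : V → ℝ) (hT : ∀ v, p ^ 2 * Sv v ≤ T v ∧ T v ≤ Sv v)
    (Utmin : V → ℝ) (hUt : ∀ v, Utmin v = u v - (β / α) * T v)
    (ut : V → Finset V → ℝ)
    (hut : ∀ v (S : Finset V), ut v S = α * u v - (β / 2) * ∑ w ∈ S, s v w)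
    (fhat : Finset V → ℝ)
    (hfhat : ∀ S : Finset V, fhat S = ∑ v ∈ S, max (ut v S) (α * Utmin v))
    (S : Finset V) (hScard : S.card = k)
    (happrox : ∀ T' : Finset V, T'.card = k → fhat S ≥ (1 / 2) * fhat T') :
    (∀ T' : Finset V, T'.card = k → f S ≥ (1 / (2 * r)) * f T') ∧
      (∀ Sstar : Finset V, Sstar.card = k →
        (∀ T' : Finset V, T'.card = k → f T' ≤ f Sstar) →
        f S ≥ (1 / (2 * r)) * f Sstar) := by
  have hq1 : p ^ 2 ≤ 1 := by nlinarith
  have hq0 : (0:ℝ) ≤ p ^ 2 := sq_nonneg p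
  have hrpos : 0 < r := by nlinarith
  have hr1 : 1 ≤ r := by nlinarith
  -- f as a sum of ut
  have key : ∀ S' : Finset V, f S' = ∑ v ∈ S', ut v S' := by
    intro S'
    rw [hf, Finset.mul_sum, Finset.mul_sum, ← Finset.sum_sub_distrib]
    exact Finset.sum_congr rfl fun v _ => (hut v S').symm
  have hSvnn : ∀ v, 0 ≤ Sv v := fun v => by
    rw [hSv]; exact Finset.sum_nonneg fun w _ => hnn v w
  have hsum_le : ∀ (S' : Finset V) (v : V), ∑ w ∈ S', s v w ≤ Sv v := fun S' v => by
    rw [hSv]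
    exact Finset.sum_le_sum_of_subset_of_nonneg (Finset.subset_univ _)
      fun w _ _ => hnn v w
  have hsumnn : ∀ (S' : Finset V) (v : V), 0 ≤ ∑ w ∈ S', s v w := fun S' v =>
    Finset.sum_nonneg fun w _ => hnn v w
  have haUmin : ∀ v, α * Umin v = α * u v - β * Sv v := fun v => by
    rw [hUmin]; field_simp
  have haUt : ∀ v, α * Utmin v = α * u v - β * T v := fun v => by
    rw [hUt]; field_simp
  -- ut is bounded below by α * Umin
  have hut_ge : ∀ (S' : Finset V) (v : V), α * Umin v ≤ ut v S' := by
    intro S' v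
    rw [hut, haUmin]
    have h1 := hsum_le S' v
    have h2 := hsumnn S' v
    have h3 := hSvnn v
    nlinarith [mul_nonneg hβ (sub_nonneg.mpr h1), mul_nonneg hβ h3]
  -- f ≤ fhat
  have hf_le : ∀ S' : Finset V, f S' ≤ fhat S' := by
    intro S'
    rw [key, hfhat]
    exact Finset.sum_le_sum fun v _ => le_max_left _ _
  -- fhat S ≤ r * f S
  have hfhat_le : fhat S ≤ r * f S := by
    rw [hfhat, key, Finset.mul_sum]
    refine Finset.sum_le_sum fun v _ => ?_
    have hutpos : 0 < ut v S := lt_of_lt_of_le (mul_pos hα (hUminpos v)) (hut_ge S v)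
    refine max_le ?_ ?_
    · nlinarith
    · have hge := hut_ge S v
      have ham := haUmin v
      have hat := haUt v
      have hbt : p ^ 2 * (β * Sv v) ≤ β * T v := by
        nlinarith [mul_nonneg hβ (sub_nonneg.mpr (hT v).1)]
      have hmpos : 0 < α * Umin v := mul_pos hα (hUminpos v)
      have hau : α * u v ≤ γ * (α * Umin v) := by
        nlinarith [hratio v]
      rw [hat]
      nlinarith [mul_nonneg (sub_nonneg.mpr hq1) (sub_nonneg.mpr hau),
        mul_nonneg (sub_nonneg.mpr hq1) hmpos.le,
        mul_nonneg (sub_nonneg.mpr hr1) (sub_nonneg.mpr hge)]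
  have main : ∀ T' : Finset V, T'.card = k → f S ≥ (1 / (2 * r)) * f T' := by
    intro T' hT'
    have h1 := happrox T' hT'
    have h2 := hf_le T'
    rw [ge_iff_le, one_div, inv_mul_le_iff₀ (by positivity)]
    nlinarith
  exact ⟨main, fun Sstar h1 _ => main Sstar h1⟩
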